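/- Let 0 < α < β and p₁, p₂ > 0 with p₁ + p₂ = 1. Then there exists a constant C ≥ 1 such that for all n ≥ 1, C⁻¹·n^{−1/α} ≤ ∫₀¹ x_n(ω) dω ≤ C·n^{−1/α}, where the integral is with respect to Lebesgue measure on [0,1]. -/

import Mathlib

noncomputable section

open Real MeasureTheory Set Filter

/-- The LSV map `T_γ` on `[0,1]`: `x(1+2^γ x^γ)` on `[0,1/2]`, `2x-1` on `(1/2,1]`. -/
noncomputable def lsv (γ : ℝ) (x : ℝ) : ℝ :=
  if x ≤ 1 / 2 then x * (1 + 2 ^ γ * x ^ γ) else 2 * x - 1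

/-- The left branch of the LSV map. -/
noncomputable def lsvLeft (γ : ℝ) (x : ℝ) : ℝ := x * (1 + 2 ^ γ * x ^ γ)

/-- The random parameter selection: `α` for `ω ∈ [0,p₁)`, `β` for `ω ∈ [p₁,1]`. -/
noncomputable def sel (α β p₁ : ℝ) (ω : ℝ) : ℝ := if ω < p₁ then α else β

/-- The randomizing map `φ` on `[0,1]`. -/
noncomputable def phiMap (p₁ p₂ : ℝ) (ω : ℝ) : ℝ :=
  if ω < p₁ then ω / p₁ else (ω - p₁) / p₂

/-- The skew product `S(x,ω) = (T_{α(ω)}(x), φ(ω))`. -/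
noncomputable def skew (α β p₁ p₂ : ℝ) (z : ℝ × ℝ) : ℝ × ℝ :=
  (lsv (sel α β p₁ z.2) z.1, phiMap p₁ p₂ z.2)

/-- Random iterates: `randIter n ω = T_ω^n = T_{α(φ^{n-1}ω)} ∘ ⋯ ∘ T_{α(ω)}`. -/
noncomputable def randIter (α β p₁ p₂ : ℝ) : ℕ → ℝ → ℝ → ℝ
  | 0, _, x => x
  | n + 1, ω, x => randIter α β p₁ p₂ n (phiMap p₁ p₂ ω) (lsv (sel α β p₁ ω) x)

/-- The deterministic backward orbit `x_n^γ`: `x₀^γ = 1`, `x₁^γ = 1/2`, and for `n ≥ 2`,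
`x_n^γ` is the (unique) point of `(0,1/2]` with `T_γ(x_n^γ) = x_{n-1}^γ`. -/
def IsDetBackOrbit (γ : ℝ) (x : ℕ → ℝ) : Prop :=
  x 0 = 1 ∧ x 1 = 1 / 2 ∧
    ∀ n, 2 ≤ n → x n ∈ Set.Ioc (0 : ℝ) (1 / 2) ∧ lsv γ (x n) = x (n - 1)

/-- The random backward orbit `x_n(ω)`: `x₀(ω) = 1`, `x₁(ω) = 1/2`, and for `n ≥ 2`,
`x_n(ω)` is the (unique) point of `(0,1/2]` with `T_{α(ω)}(x_n(ω)) = x_{n-1}(φω)`. -/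
def IsRandBackOrbit (α β p₁ p₂ : ℝ) (X : ℕ → ℝ → ℝ) : Prop :=
  (∀ ω, X 0 ω = 1) ∧ (∀ ω, X 1 ω = 1 / 2) ∧
    ∀ n, 2 ≤ n → ∀ ω, X n ω ∈ Set.Ioc (0 : ℝ) (1 / 2) ∧
      lsv (sel α β p₁ ω) (X n ω) = X (n - 1) (phiMap p₁ p₂ ω)

/-- The points `x'_n(ω)`: `x'₀(ω) = 1`, `x'₁(ω) = 3/4`, and
`x'_n(ω) = (x_n(φω) + 1)/2` for `n ≥ 2`. -/
def IsRandBackOrbitPrime (p₁ p₂ : ℝ) (X X' : ℕ → ℝ → ℝ) : Prop :=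
  (∀ ω, X' 0 ω = 1) ∧ (∀ ω, X' 1 ω = 3 / 4) ∧
    ∀ n, 2 ≤ n → ∀ ω, X' n ω = (X n (phiMap p₁ p₂ ω) + 1) / 2

/-- First return time of `(x,ω)` to `(1/2,1] × [0,1]` under the skew product. -/
noncomputable def returnTime (α β p₁ p₂ : ℝ) (x ω : ℝ) : ℕ :=
  sInf {k : ℕ | 1 ≤ k ∧ 1 / 2 < randIter α β p₁ p₂ k ω x}

namespace LSVAux

lemma lsv_eq_left {γ x : ℝ} (h : x ≤ 1/2) : lsv γ x = lsvLeft γ x := if_pos h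

lemma lsvLeft_eq' {γ x : ℝ} (hx : 0 ≤ x) : lsvLeft γ x = x * (1 + (2*x)^γ) := by
  rw [lsvLeft, Real.mul_rpow (by norm_num) hx]

lemma le_lsvLeft {γ x : ℝ} (hx0 : 0 ≤ x) : x ≤ lsvLeft γ x := by
  rw [lsvLeft]
  have h2 : (0:ℝ) < 2 ^ γ := Real.rpow_pos_of_pos (by norm_num) _
  have h1 : 0 ≤ x ^ γ := Real.rpow_nonneg hx0 _
  nlinarith [mul_nonneg hx0 (mul_nonneg h2.le h1)]

lemma lsvLeft_le_two_mul {γ x : ℝ} (hγ : 0 < γ) (hx0 : 0 ≤ x) (hx : x ≤ 1/2) :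
    lsvLeft γ x ≤ 2 * x := by
  rw [lsvLeft_eq' hx0]
  have h1 : (2*x)^γ ≤ 1 := Real.rpow_le_one (by linarith) (by linarith) hγ.le
  nlinarith

lemma lsvLeft_strictMonoOn (γ : ℝ) (hγ : 0 < γ) : StrictMonoOn (lsvLeft γ) (Ici 0) := by
  intro a ha b hb hab
  simp only [mem_Ici] at ha hb
  have h2 : (0:ℝ) < 2 ^ γ := Real.rpow_pos_of_pos (by norm_num) _
  have h1 : a ^ γ ≤ b ^ γ := Real.rpow_le_rpow ha hab.le hγ.le
  have h0 : 0 ≤ a ^ γ := Real.rpow_nonneg ha _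
  calc lsvLeft γ a = a * (1 + 2^γ * a^γ) := rfl
    _ < b * (1 + 2^γ * a^γ) := by
        have hpos : (0:ℝ) < 1 + 2 ^ γ * a ^ γ := by nlinarith [mul_nonneg h2.le h0]
        exact mul_lt_mul_of_pos_right hab hpos
    _ ≤ b * (1 + 2^γ * b^γ) := by
        have h3 : 2 ^ γ * a ^ γ ≤ 2 ^ γ * b ^ γ := mul_le_mul_of_nonneg_left h1 h2.le
        nlinarith

lemma lsvLeft_param_le {α γ x : ℝ} (hα : 0 < α) (hαγ : α ≤ γ) (hx0 : 0 ≤ x) (hx : x ≤ 1/2) :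
    lsvLeft γ x ≤ lsvLeft α x := by
  rcases eq_or_lt_of_le hx0 with rfl | hx0'
  · simp [lsvLeft]
  rw [lsvLeft_eq' hx0, lsvLeft_eq' hx0]
  have h1 : (2*x)^γ ≤ (2*x)^α :=
    Real.rpow_le_rpow_of_exponent_ge (by linarith) (by linarith) hαγ
  nlinarith

/-- Measurable monotone inverse of the left branch. -/
def G (γ y : ℝ) : ℝ := sSup (insert 0 {x | x ∈ Icc (0:ℝ) (1/2) ∧ lsvLeft γ x ≤ y})

lemma G_bddAbove (γ y : ℝ) :
    BddAbove (insert 0 {x | x ∈ Icc (0:ℝ) (1/2) ∧ lsvLeft γ x ≤ y}) := by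
  refine ⟨1/2, ?_⟩
  intro z hz
  rcases mem_insert_iff.1 hz with rfl | hz'
  · norm_num
  · exact hz'.1.2

lemma G_mono (γ : ℝ) : Monotone (G γ) := by
  intro y y' h
  apply csSup_le_csSup (G_bddAbove γ y') (insert_nonempty _ _)
  apply insert_subset_insert
  rintro z ⟨hz1, hz2⟩
  exact ⟨hz1, hz2.trans h⟩

lemma G_meas (γ : ℝ) : Measurable (G γ) := (G_mono γ).measurable

lemma G_eq {γ x : ℝ} (hγ : 0 < γ) (hx : x ∈ Ioc (0:ℝ) (1/2)) : G γ (lsvLeft γ x) = x := by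
  apply le_antisymm
  · apply csSup_le (insert_nonempty _ _)
    intro z hz
    rcases mem_insert_iff.1 hz with rfl | ⟨hz1, hz2⟩
    · exact hx.1.le
    · exact ((lsvLeft_strictMonoOn γ hγ).le_iff_le hz1.1 hx.1.le).1 hz2
  · exact le_csSup (G_bddAbove _ _) (mem_insert_of_mem _ ⟨⟨hx.1.le, hx.2⟩, le_rfl⟩)

lemma phiMap_meas (p₁ p₂ : ℝ) : Measurable (phiMap p₁ p₂) := by
  unfold phiMap
  exact Measurable.ite measurableSet_Iio (measurable_id.div_const _)
    ((measurable_id.sub_const _).div_const _)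

/-- number of visits to `[0,p₁)` in the first `m` steps of `φ`. -/
def Dcnt (p₁ p₂ : ℝ) : ℕ → ℝ → ℕ
  | 0, _ => 0
  | m+1, ω => (if ω < p₁ then 1 else 0) + Dcnt p₁ p₂ m (phiMap p₁ p₂ ω)

lemma Dcnt_meas (p₁ p₂ : ℝ) : ∀ m, Measurable (Dcnt p₁ p₂ m)
  | 0 => measurable_const
  | (m+1) => by
    show Measurable fun ω => (if ω < p₁ then 1 else 0) + Dcnt p₁ p₂ m (phiMap p₁ p₂ ω)
    exact (Measurable.ite measurableSet_Iio measurable_const measurable_const).add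
      ((Dcnt_meas p₁ p₂ m).comp (phiMap_meas p₁ p₂))

lemma bern_low {α t : ℝ} (hα : 0 < α) (ht : 0 ≤ t) (ht1 : t ≤ 1) :
    1 + min α ((2:ℝ)^α - 1) * t ≤ (1+t)^α := by
  rcases le_or_gt 1 α with h1 | h1
  · have h2 := one_add_mul_self_le_rpow_one_add (by linarith : (-1:ℝ) ≤ t) h1
    have hm : min α ((2:ℝ)^α - 1) * t ≤ α * t :=
      mul_le_mul_of_nonneg_right (min_le_left _ _) ht
    linarith
  · have hcc := (Real.concaveOn_rpow hα.le h1.le).2 (show (1:ℝ) ∈ Ici (0:ℝ) by norm_num)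
      (show (2:ℝ) ∈ Ici (0:ℝ) by norm_num) (show (0:ℝ) ≤ 1 - t by linarith) ht
      (by ring : (1 - t) + t = 1)
    simp only [smul_eq_mul, Real.one_rpow] at hcc
    have h2 : (1-t)*(1:ℝ) + t*2 = 1 + t := by ring
    rw [h2] at hcc
    have hm : min α ((2:ℝ)^α - 1) * t ≤ ((2:ℝ)^α - 1) * t :=
      mul_le_mul_of_nonneg_right (min_le_right _ _) ht
    nlinarith

lemma bern_up {α t : ℝ} (hα : 0 < α) (ht : 0 ≤ t) (ht1 : t ≤ 1) :
    (1+t)^α ≤ 1 + max α ((2:ℝ)^α - 1) * t := by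
  rcases le_or_gt α 1 with h1 | h1
  · have h2 := rpow_one_add_le_one_add_mul_self (by linarith : (-1:ℝ) ≤ t) hα.le h1
    have hm : α * t ≤ max α ((2:ℝ)^α - 1) * t :=
      mul_le_mul_of_nonneg_right (le_max_left _ _) ht
    linarith
  · have hcv := (convexOn_rpow h1.le).2 (show (1:ℝ) ∈ Ici (0:ℝ) by norm_num)
      (show (2:ℝ) ∈ Ici (0:ℝ) by norm_num) (show (0:ℝ) ≤ 1 - t by linarith) ht
      (by ring : (1 - t) + t = 1)
    simp only [smul_eq_mul, Real.one_rpow] at hcv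
    have h2 : (1-t)*(1:ℝ) + t*2 = 1 + t := by ring
    rw [h2] at hcv
    have hm : ((2:ℝ)^α - 1) * t ≤ max α ((2:ℝ)^α - 1) * t :=
      mul_le_mul_of_nonneg_right (le_max_right _ _) ht
    nlinarith

lemma step_bounds {α γ x : ℝ} (hα : 0 < α) (hαγ : α ≤ γ) (hx : x ∈ Ioc (0:ℝ) (1/2)) :
    (lsvLeft γ x) ^ (-α) ≤ x ^ (-α) ∧
    x ^ (-α) ≤ (lsvLeft γ x) ^ (-α) + max α ((2:ℝ)^α-1) * 2^α ∧
    (γ = α → (lsvLeft γ x) ^ (-α) + min α ((2:ℝ)^α-1) ≤ x ^ (-α)) := by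
  obtain ⟨hx0, hx2⟩ := hx
  have hγ : 0 < γ := lt_of_lt_of_le hα hαγ
  set y := lsvLeft γ x with hy
  have hxy : x ≤ y := le_lsvLeft hx0.le
  have hy2 : y ≤ 2*x := lsvLeft_le_two_mul hγ hx0.le hx2
  have hy0 : 0 < y := lt_of_lt_of_le hx0 hxy
  set t := (2*x)^α with htdef
  have ht0 : 0 < t := Real.rpow_pos_of_pos (by linarith) _
  have ht1 : t ≤ 1 := Real.rpow_le_one (by linarith) (by linarith) hα.le
  have htγ : (2*x)^γ ≤ t := Real.rpow_le_rpow_of_exponent_ge (by linarith) (by linarith) hαγ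
  have htγ0 : 0 ≤ (2*x)^γ := Real.rpow_nonneg (by linarith) _
  have hyx : y = x * (1 + (2*x)^γ) := lsvLeft_eq' hx0.le
  have hne : ((1:ℝ) + (2*x)^γ)^α ≠ 0 := ne_of_gt (Real.rpow_pos_of_pos (by linarith) _)
  have hxpow : x^(-α) = y^(-α) * (1 + (2*x)^γ)^α := by
    rw [hyx, Real.mul_rpow hx0.le (by linarith),
      Real.rpow_neg (by linarith : (0:ℝ) ≤ 1 + (2*x)^γ)]
    rw [show x ^ (-α) * (((1 + (2*x)^γ) ^ α)⁻¹) * (1 + (2*x)^γ) ^ α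
        = x ^ (-α) * (((1 + (2*x)^γ) ^ α) * ((1 + (2*x)^γ) ^ α)⁻¹) from by ring,
      mul_inv_cancel₀ hne, mul_one]
  have hmono1 : y^(-α) ≤ x^(-α) :=
    Real.rpow_le_rpow_of_nonpos hx0 hxy (by linarith)
  have hynn : (0:ℝ) ≤ y^(-α) := (Real.rpow_pos_of_pos hy0 _).le
  have hxt : x^(-α) * t = 2^α := by
    have hxx : x^(-α) * x^α = 1 := by
      rw [← Real.rpow_add hx0]; simp
    rw [htdef, Real.mul_rpow (by norm_num : (0:ℝ) ≤ 2) hx0.le,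
      show x ^ (-α) * ((2:ℝ)^α * x^α) = (x^(-α) * x^α) * 2^α from by ring, hxx, one_mul]
  have hyt : y^(-α) * t ≤ 2^α := by
    calc y^(-α) * t ≤ x^(-α) * t := mul_le_mul_of_nonneg_right hmono1 ht0.le
      _ = 2^α := hxt
  refine ⟨hmono1, ?_, ?_⟩
  · have hKnn : (0:ℝ) ≤ max α ((2:ℝ)^α-1) := le_trans hα.le (le_max_left _ _)
    have hE : (1 + (2*x)^γ)^α ≤ (1+t)^α :=
      Real.rpow_le_rpow (by linarith) (by linarith) hα.le
    have hBu : (1+t)^α ≤ 1 + max α ((2:ℝ)^α-1) * t := bern_up hα ht0.le ht1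
    have h2 : x^(-α) ≤ y^(-α) * (1 + max α ((2:ℝ)^α-1) * t) := by
      rw [hxpow]
      exact mul_le_mul_of_nonneg_left (hE.trans hBu) hynn
    have h3 : y^(-α) * (1 + max α ((2:ℝ)^α-1) * t)
        = y^(-α) + max α ((2:ℝ)^α-1) * (y^(-α) * t) := by ring
    have h4 : max α ((2:ℝ)^α-1) * (y^(-α) * t) ≤ max α ((2:ℝ)^α-1) * 2^α :=
      mul_le_mul_of_nonneg_left hyt hKnn
    linarith
  · intro hγα
    subst hγα
    have h2α : (1:ℝ) < 2^γ := by
      rw [show γ = γ from rfl] at *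
      exact (Real.one_lt_rpow_iff_of_pos (by norm_num)).2 (Or.inl ⟨by norm_num, hα⟩)
    have hcnn : (0:ℝ) ≤ min γ ((2:ℝ)^γ-1) := le_min hα.le (by linarith)
    have hBl : 1 + min γ ((2:ℝ)^γ-1) * t ≤ (1+t)^γ := bern_low hα ht0.le ht1
    have h5 : (1:ℝ) ≤ y^(-γ) * t := by
      have h3 : (2*x)^(-γ) ≤ y^(-γ) :=
        Real.rpow_le_rpow_of_nonpos hy0 hy2 (by linarith)
      have h4 : (2*x)^(-γ) * t = 1 := by
        rw [Real.rpow_neg (by linarith : (0:ℝ) ≤ 2*x), htdef]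
        exact inv_mul_cancel₀ (ne_of_gt ht0)
      calc (1:ℝ) = (2*x)^(-γ) * t := h4.symm
        _ ≤ y^(-γ) * t := mul_le_mul_of_nonneg_right h3 ht0.le
    have h6 : y^(-γ) * (1 + min γ ((2:ℝ)^γ-1) * t) ≤ y^(-γ) * (1+t)^γ :=
      mul_le_mul_of_nonneg_left hBl hynn
    have h7 : y^(-γ) + min γ ((2:ℝ)^γ-1) * (y^(-γ) * t)
        = y^(-γ) * (1 + min γ ((2:ℝ)^γ-1) * t) := by ring
    have h8 : min γ ((2:ℝ)^γ-1) * 1 ≤ min γ ((2:ℝ)^γ-1) * (y^(-γ) * t) :=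
      mul_le_mul_of_nonneg_left h5 hcnn
    rw [hxpow]
    have h9 : y ^ (-γ) * (1 + t) ^ γ = y^(-γ) * (1 + (2*x)^γ)^γ := by rw [htdef]
    linarith [h6, h9.symm.le]


lemma int_on {s : Set ℝ} (hvol : volume s ≠ ⊤) {f : ℝ → ℝ}
    (hf : Measurable f) {M : ℝ} (hM : ∀ ω, |f ω| ≤ M) : IntegrableOn f s := by
  refine Integrable.mono' (g := fun _ => M) ?_ hf.aestronglyMeasurable
    (ae_of_all _ fun ω => by rw [Real.norm_eq_abs]; exact hM ω)
  exact integrableOn_const hvol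

lemma half_pow_Dcnt_meas (p₁ p₂ : ℝ) (m : ℕ) :
    Measurable fun ω => ((1/2:ℝ))^(Dcnt p₁ p₂ m ω) :=
  Measurable.comp (f := Dcnt p₁ p₂ m) (g := fun k : ℕ => ((1/2:ℝ))^k)
    measurable_from_top (Dcnt_meas p₁ p₂ m)

lemma half_pow_abs (p₁ p₂ : ℝ) (m : ℕ) (ω : ℝ) : |((1/2:ℝ))^(Dcnt p₁ p₂ m ω)| ≤ 1 := by
  rw [abs_of_nonneg (by positivity)]
  exact pow_le_one₀ (by norm_num) (by norm_num)

lemma F_eq {p₁ p₂ : ℝ} (hp₁ : 0 < p₁) (hp₂ : 0 < p₂) (hp : p₁ + p₂ = 1) :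
    ∀ m, (∫ ω in Icc (0:ℝ) 1, ((1/2:ℝ))^(Dcnt p₁ p₂ m ω)) = (1 - p₁/2)^m := by
  intro m
  induction m with
  | zero =>
    simp only [Dcnt, pow_zero]
    rw [setIntegral_const]
    simp [Real.volume_Icc]
  | succ m ih =>
    have hp₁1 : p₁ < 1 := by linarith
    have hIco : volume (Ico (0:ℝ) p₁) ≠ ⊤ := (measure_Ico_lt_top).ne
    have hIcc : volume (Icc p₁ (1:ℝ)) ≠ ⊤ := (measure_Icc_lt_top).ne
    have key : ∫ ω in Icc (0:ℝ) 1, ((1/2:ℝ))^(Dcnt p₁ p₂ (m+1) ω)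
        = (∫ ω in Ico (0:ℝ) p₁, ((1/2:ℝ))^(Dcnt p₁ p₂ (m+1) ω))
          + ∫ ω in Icc p₁ (1:ℝ), ((1/2:ℝ))^(Dcnt p₁ p₂ (m+1) ω) := by
      rw [← Ico_union_Icc_eq_Icc hp₁.le hp₁1.le]
      exact setIntegral_union
        (by rw [Set.disjoint_left]; intro a ha hb; exact absurd hb.1 (not_le.mpr ha.2))
        measurableSet_Icc
        (int_on hIco (half_pow_Dcnt_meas p₁ p₂ (m+1)) (half_pow_abs p₁ p₂ (m+1)))
        (int_on hIcc (half_pow_Dcnt_meas p₁ p₂ (m+1)) (half_pow_abs p₁ p₂ (m+1)))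
    have e1 : ∫ ω in Ico (0:ℝ) p₁, ((1/2:ℝ))^(Dcnt p₁ p₂ (m+1) ω)
        = (1/2) * ((p₁:ℝ) * ∫ ω in Icc (0:ℝ) 1, ((1/2:ℝ))^(Dcnt p₁ p₂ m ω)) := by
      have c1 : ∫ ω in Ico (0:ℝ) p₁, ((1/2:ℝ))^(Dcnt p₁ p₂ (m+1) ω)
          = ∫ ω in Ico (0:ℝ) p₁, (1/2) * ((1/2:ℝ))^(Dcnt p₁ p₂ m (ω/p₁)) := by
        apply setIntegral_congr_fun measurableSet_Ico
        intro ω hω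
        have hω1 : ω < p₁ := hω.2
        show ((1/2:ℝ))^(Dcnt p₁ p₂ (m+1) ω) = _
        rw [show Dcnt p₁ p₂ (m+1) ω = 1 + Dcnt p₁ p₂ m (phiMap p₁ p₂ ω) from by
          simp [Dcnt, if_pos hω1]]
        rw [pow_add, pow_one, show phiMap p₁ p₂ ω = ω/p₁ from if_pos hω1]
      rw [c1, integral_const_mul]
      congr 1
      have c2 : ∫ ω in Ico (0:ℝ) p₁, ((1/2:ℝ))^(Dcnt p₁ p₂ m (ω/p₁))
          = ∫ ω in (0:ℝ)..p₁, ((1/2:ℝ))^(Dcnt p₁ p₂ m (ω/p₁)) := by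
        rw [intervalIntegral.integral_of_le hp₁.le, integral_Ico_eq_integral_Ioo,
          integral_Ioc_eq_integral_Ioo]
      rw [c2, intervalIntegral.integral_comp_div
        (f := fun u => ((1/2:ℝ))^(Dcnt p₁ p₂ m u)) (ne_of_gt hp₁)]
      rw [zero_div, div_self (ne_of_gt hp₁), smul_eq_mul]
      congr 1
      rw [intervalIntegral.integral_of_le (by norm_num : (0:ℝ) ≤ 1),
        ← integral_Icc_eq_integral_Ioc]
    have e2 : ∫ ω in Icc p₁ (1:ℝ), ((1/2:ℝ))^(Dcnt p₁ p₂ (m+1) ω)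
        = (p₂:ℝ) * ∫ ω in Icc (0:ℝ) 1, ((1/2:ℝ))^(Dcnt p₁ p₂ m ω) := by
      have c1 : ∫ ω in Icc p₁ (1:ℝ), ((1/2:ℝ))^(Dcnt p₁ p₂ (m+1) ω)
          = ∫ ω in Icc p₁ (1:ℝ), ((1/2:ℝ))^(Dcnt p₁ p₂ m ((ω - p₁)/p₂)) := by
        apply setIntegral_congr_fun measurableSet_Icc
        intro ω hω
        have hω1 : ¬ ω < p₁ := not_lt.mpr hω.1
        show ((1/2:ℝ))^(Dcnt p₁ p₂ (m+1) ω) = _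
        rw [show Dcnt p₁ p₂ (m+1) ω = 0 + Dcnt p₁ p₂ m (phiMap p₁ p₂ ω) from by
          simp [Dcnt, if_neg hω1]]
        rw [zero_add, show phiMap p₁ p₂ ω = (ω - p₁)/p₂ from if_neg hω1]
      rw [c1]
      have c2 : ∫ ω in Icc p₁ (1:ℝ), ((1/2:ℝ))^(Dcnt p₁ p₂ m ((ω - p₁)/p₂))
          = ∫ ω in p₁..(1:ℝ), ((1/2:ℝ))^(Dcnt p₁ p₂ m ((ω - p₁)/p₂)) := by
        rw [intervalIntegral.integral_of_le hp₁1.le, integral_Icc_eq_integral_Ioc]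
      rw [c2]
      have c3 := intervalIntegral.integral_comp_sub_right (a := p₁) (b := (1:ℝ))
        (fun u => ((1/2:ℝ))^(Dcnt p₁ p₂ m (u/p₂))) p₁
      rw [c3, sub_self, show (1:ℝ) - p₁ = p₂ from by linarith]
      rw [intervalIntegral.integral_comp_div
        (f := fun u => ((1/2:ℝ))^(Dcnt p₁ p₂ m u)) (ne_of_gt hp₂)]
      rw [zero_div, div_self (ne_of_gt hp₂), smul_eq_mul]
      congr 1
      rw [intervalIntegral.integral_of_le (by norm_num : (0:ℝ) ≤ 1),
        ← integral_Icc_eq_integral_Ioc]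
    rw [key, e1, e2, ih, pow_succ]
    linear_combination ((1 - p₁/2)^m) * hp


lemma rpow_inv_le {α x A : ℝ} (hα : 0 < α) (hx : 0 < x) (hA : 0 < A) (h : A ≤ x ^ (-α)) :
    x ≤ A ^ (-(1/α)) := by
  have hxx : (x ^ (-α)) ^ (-(1/α)) = x := by
    rw [← Real.rpow_mul hx.le, show (-α)*(-(1/α)) = 1 from by field_simp, Real.rpow_one]
  calc x = (x ^ (-α)) ^ (-(1/α)) := hxx.symm
    _ ≤ A ^ (-(1/α)) :=
      Real.rpow_le_rpow_of_nonpos hA h (neg_nonpos.mpr (by positivity))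

lemma le_rpow_inv {α x A : ℝ} (hα : 0 < α) (hx : 0 < x) (hA : 0 < A) (h : x ^ (-α) ≤ A) :
    A ^ (-(1/α)) ≤ x := by
  have hxx : (x ^ (-α)) ^ (-(1/α)) = x := by
    rw [← Real.rpow_mul hx.le, show (-α)*(-(1/α)) = 1 from by field_simp, Real.rpow_one]
  calc A ^ (-(1/α)) ≤ (x ^ (-α)) ^ (-(1/α)) :=
      Real.rpow_le_rpow_of_nonpos (Real.rpow_pos_of_pos hx _) h (neg_nonpos.mpr (by positivity))
    _ = x := hxx

end LSVAux

open LSVAux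

set_option maxHeartbeats 2000000 in
/-- For `0 < α < β` and `p₁, p₂ > 0` with `p₁ + p₂ = 1`, there is
`C ≥ 1` with `C⁻¹ n^{−1/α} ≤ ∫₀¹ x_n(ω) dω ≤ C n^{−1/α}` for all `n ≥ 1`. -/
theorem expectation_randBackOrbit (α β p₁ p₂ : ℝ) (hα : 0 < α) (hαβ : α < β)
    (hp₁ : 0 < p₁) (hp₂ : 0 < p₂) (hp : p₁ + p₂ = 1)
    (X : ℕ → ℝ → ℝ) (hX : IsRandBackOrbit α β p₁ p₂ X) :
    ∃ C : ℝ, 1 ≤ C ∧ ∀ n : ℕ, 1 ≤ n →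
      C⁻¹ * (n : ℝ) ^ (-(1 / α)) ≤ (∫ ω in Set.Icc (0 : ℝ) 1, X n ω) ∧
      (∫ ω in Set.Icc (0 : ℝ) 1, X n ω) ≤ C * (n : ℝ) ^ (-(1 / α)) := by
  classical
  obtain ⟨hX0, hX1, hXn⟩ := hX
  have hβ : 0 < β := lt_trans hα hαβ
  have hp₁1 : p₁ < 1 := by linarith
  have hmem : ∀ n, 1 ≤ n → ∀ ω, X n ω ∈ Ioc (0:ℝ) (1/2) := by
    intro n hn ω
    rcases eq_or_lt_of_le hn with h | h
    · rw [← h, hX1 ω]; constructor <;> norm_num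
    · exact (hXn n h ω).1
  have hsel_lb : ∀ ω, α ≤ sel α β p₁ ω := by
    intro ω; unfold sel; split
    · exact le_refl α
    · exact hαβ.le
  have hrecL : ∀ n, 2 ≤ n → ∀ ω,
      lsvLeft (sel α β p₁ ω) (X n ω) = X (n-1) (phiMap p₁ p₂ ω) := by
    intro n hn ω
    have h := (hXn n hn ω).2
    rwa [lsv_eq_left (hmem n (by omega) ω).2] at h
  set c := min α ((2:ℝ)^α - 1) with hc
  set K := max α ((2:ℝ)^α - 1) with hK
  have h2α : (1:ℝ) < 2^α :=
    (Real.one_lt_rpow_iff_of_pos (by norm_num)).2 (Or.inl ⟨by norm_num, hα⟩)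
  have hcpos : 0 < c := lt_min hα (by linarith)
  have hKpos : 0 < K := lt_of_lt_of_le hα (le_max_left _ _)
  have h2αpos : (0:ℝ) < 2^α := by linarith
  have vhalf : ((1:ℝ)/2)^(-α) = (2:ℝ)^α := by
    rw [one_div, Real.inv_rpow (by norm_num : (0:ℝ) ≤ 2),
      Real.rpow_neg (by norm_num : (0:ℝ) ≤ 2), inv_inv]
  -- upper bound on v = X^(-α)
  have hv_up : ∀ n, 1 ≤ n → ∀ ω, (X n ω)^(-α) ≤ ((2:ℝ)^α * (1+K)) * n := by
    intro n hn
    induction n, hn using Nat.le_induction with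
    | base =>
      intro ω
      rw [hX1 ω, vhalf]
      push_cast
      nlinarith
    | succ n hn ih =>
      intro ω
      have h2 : 2 ≤ n + 1 := by omega
      have hx := hmem (n+1) (by omega) ω
      have hr := hrecL (n+1) h2 ω
      simp only [Nat.add_sub_cancel] at hr
      have hstep := (step_bounds hα (hsel_lb ω) hx).2.1
      rw [← hK, hr] at hstep
      have hih := ih (phiMap p₁ p₂ ω)
      push_cast
      push_cast at hih
      nlinarith [hih, hstep]
  -- lower bound on v
  have hv_low : ∀ n, 1 ≤ n → ∀ ω,
      (2:ℝ)^α + c * (Dcnt p₁ p₂ (n-1) ω : ℝ) ≤ (X n ω)^(-α) := by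
    intro n hn
    induction n, hn using Nat.le_induction with
    | base =>
      intro ω
      rw [hX1 ω, vhalf]
      norm_num [Dcnt]
    | succ n hn ih =>
      intro ω
      have h2 : 2 ≤ n + 1 := by omega
      have hx := hmem (n+1) (by omega) ω
      have hr := hrecL (n+1) h2 ω
      simp only [Nat.add_sub_cancel] at hr ⊢
      have hn' : n - 1 + 1 = n := by omega
      by_cases hω : ω < p₁
      · have hseq : sel α β p₁ ω = α := if_pos hω
        rw [hseq] at hr
        have hstep := (step_bounds hα (le_refl α) hx).2.2 rfl
        rw [← hc, hr] at hstep
        have hD : Dcnt p₁ p₂ n ω = 1 + Dcnt p₁ p₂ (n-1) (phiMap p₁ p₂ ω) := by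
          conv_lhs => rw [← hn']
          simp [Dcnt, if_pos hω]
        rw [hD]
        have hih := ih (phiMap p₁ p₂ ω)
        push_cast
        linarith
      · have hseq : sel α β p₁ ω = β := if_neg hω
        rw [hseq] at hr
        have hstep := (step_bounds hα hαβ.le hx).1
        rw [hr] at hstep
        have hD : Dcnt p₁ p₂ n ω = Dcnt p₁ p₂ (n-1) (phiMap p₁ p₂ ω) := by
          conv_lhs => rw [← hn']
          simp [Dcnt, if_neg hω]
        rw [hD]
        have hih := ih (phiMap p₁ p₂ ω)
        linarith
  -- measurability of X n
  have hGXrep : ∀ n, 2 ≤ n → ∀ ω, X n ω =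
      if ω < p₁ then G α (X (n-1) (phiMap p₁ p₂ ω)) else G β (X (n-1) (phiMap p₁ p₂ ω)) := by
    intro n hn ω
    have hx := hmem n (by omega) ω
    have hr := hrecL n hn ω
    by_cases hω : ω < p₁
    · rw [if_pos hω]
      rw [show sel α β p₁ ω = α from if_pos hω] at hr
      rw [← hr, G_eq hα hx]
    · rw [if_neg hω]
      rw [show sel α β p₁ ω = β from if_neg hω] at hr
      rw [← hr, G_eq hβ hx]
  have hXmeas : ∀ n, 1 ≤ n → Measurable (X n) := by
    intro n hn
    induction n, hn using Nat.le_induction with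
    | base =>
      have h1 : X 1 = fun _ => 1/2 := funext hX1
      rw [h1]; exact measurable_const
    | succ n hn ih =>
      have hrep : X (n+1) = fun ω =>
          if ω < p₁ then G α (X n (phiMap p₁ p₂ ω)) else G β (X n (phiMap p₁ p₂ ω)) := by
        funext ω
        have := hGXrep (n+1) (by omega) ω
        simpa using this
      rw [hrep]
      have hm := ih.comp (phiMap_meas p₁ p₂)
      exact Measurable.ite measurableSet_Iio ((G_meas α).comp hm) ((G_meas β).comp hm)
  have hXint : ∀ n, 1 ≤ n → IntegrableOn (X n) (Icc (0:ℝ) 1) := by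
    intro n hn
    apply int_on (M := 1/2) measure_Icc_lt_top.ne (hXmeas n hn)
    intro ω
    have h := hmem n hn ω
    rw [abs_of_pos h.1]; exact h.2
  -- pointwise lower bound
  have hlow_pt : ∀ n : ℕ, 1 ≤ n → ∀ ω,
      ((2:ℝ)^α * (1+K))^(-(1/α)) * (n:ℝ)^(-(1/α)) ≤ X n ω := by
    intro n hn ω
    have hnpos : (0:ℝ) < n := by exact_mod_cast hn
    have hApos : (0:ℝ) < (2:ℝ)^α * (1+K) * n := by positivity
    have h1 := le_rpow_inv hα (hmem n hn ω).1 hApos (hv_up n hn ω)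
    rwa [Real.mul_rpow (by positivity) (Nat.cast_nonneg n)] at h1
  set cL := ((2:ℝ)^α * (1+K))^(-(1/α)) with hcL
  have hcLpos : 0 < cL := Real.rpow_pos_of_pos (by positivity) _
  have hIl : ∀ n : ℕ, 1 ≤ n → cL * (n:ℝ)^(-(1/α)) ≤ ∫ ω in Icc (0:ℝ) 1, X n ω := by
    intro n hn
    have h0 : cL * (n:ℝ)^(-(1/α))
        = ∫ _ω in Icc (0:ℝ) 1, (cL * (n:ℝ)^(-(1/α))) := by
      rw [setIntegral_const]
      simp [Real.volume_Icc]
    rw [h0]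
    exact setIntegral_mono_on (integrableOn_const measure_Icc_lt_top.ne)
      (hXint n hn) measurableSet_Icc (fun ω _ => hlow_pt n hn ω)
  -- pointwise upper bound for n ≥ 2
  have hup_pt : ∀ n : ℕ, 2 ≤ n → ∀ ω,
      X n ω ≤ (c * (p₁ * ((n-1:ℕ):ℝ)/2))^(-(1/α))
        + (1/2) * (2:ℝ)^(p₁ * ((n-1:ℕ):ℝ)/2) * ((1/2:ℝ))^(Dcnt p₁ p₂ (n-1) ω) := by
    intro n hn ω
    have hm1 : 1 ≤ n - 1 := by omega
    have hmpos : (0:ℝ) < ((n-1:ℕ):ℝ) := by exact_mod_cast hm1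
    have hsR : (0:ℝ) < p₁ * ((n-1:ℕ):ℝ)/2 := by positivity
    have hxmem := hmem n (by omega) ω
    have hvl := hv_low n (by omega) ω
    rcases le_or_gt (p₁ * ((n-1:ℕ):ℝ)/2) ((Dcnt p₁ p₂ (n-1) ω : ℝ)) with hcase | hcase
    · have hA : (0:ℝ) < c * (p₁ * ((n-1:ℕ):ℝ)/2) := by positivity
      have h1 : c * (p₁ * ((n-1:ℕ):ℝ)/2) ≤ (X n ω)^(-α) := by
        have h2 : c * (p₁ * ((n-1:ℕ):ℝ)/2) ≤ c * (Dcnt p₁ p₂ (n-1) ω : ℝ) :=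
          mul_le_mul_of_nonneg_left hcase hcpos.le
        linarith
      have h2 := rpow_inv_le hα hxmem.1 hA h1
      have h3 : (0:ℝ) ≤ (1/2) * (2:ℝ)^(p₁ * ((n-1:ℕ):ℝ)/2) * ((1/2:ℝ))^(Dcnt p₁ p₂ (n-1) ω) := by
        positivity
      linarith
    · have h1 : X n ω ≤ 1/2 := hxmem.2
      have hD2 : ((1/2:ℝ))^(Dcnt p₁ p₂ (n-1) ω)
          = (2:ℝ)^(-(Dcnt p₁ p₂ (n-1) ω : ℝ)) := by
        rw [Real.rpow_neg (by norm_num : (0:ℝ) ≤ 2), Real.rpow_natCast, one_div, inv_pow]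
      have h4 : (1:ℝ) ≤ (2:ℝ)^(p₁ * ((n-1:ℕ):ℝ)/2) * ((1/2:ℝ))^(Dcnt p₁ p₂ (n-1) ω) := by
        rw [hD2, ← Real.rpow_add (by norm_num : (0:ℝ) < 2)]
        exact Real.one_le_rpow (by norm_num) (by linarith)
      have h5 : (0:ℝ) ≤ (c * (p₁ * ((n-1:ℕ):ℝ)/2))^(-(1/α)) :=
        Real.rpow_nonneg (by positivity) _
      nlinarith [h4]
  -- integral upper bound for n ≥ 2
  have hIu2 : ∀ n : ℕ, 2 ≤ n → (∫ ω in Icc (0:ℝ) 1, X n ω)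
      ≤ (c * (p₁ * ((n-1:ℕ):ℝ)/2))^(-(1/α))
        + (1/2) * (2:ℝ)^(p₁ * ((n-1:ℕ):ℝ)/2) * (1 - p₁/2)^(n-1) := by
    intro n hn
    have hintD : IntegrableOn
        (fun ω => (1/2) * (2:ℝ)^(p₁ * ((n-1:ℕ):ℝ)/2) * ((1/2:ℝ))^(Dcnt p₁ p₂ (n-1) ω))
        (Icc (0:ℝ) 1) := by
      have := (int_on (s := Icc (0:ℝ) 1) measure_Icc_lt_top.ne
        (half_pow_Dcnt_meas p₁ p₂ (n-1)) (half_pow_abs p₁ p₂ (n-1)))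
      exact this.const_mul _
    have hintC : IntegrableOn (fun _ : ℝ => (c * (p₁ * ((n-1:ℕ):ℝ)/2))^(-(1/α)))
        (Icc (0:ℝ) 1) := integrableOn_const measure_Icc_lt_top.ne
    calc (∫ ω in Icc (0:ℝ) 1, X n ω)
        ≤ ∫ ω in Icc (0:ℝ) 1, ((c * (p₁ * ((n-1:ℕ):ℝ)/2))^(-(1/α))
            + (1/2) * (2:ℝ)^(p₁ * ((n-1:ℕ):ℝ)/2) * ((1/2:ℝ))^(Dcnt p₁ p₂ (n-1) ω)) :=
          setIntegral_mono_on (hXint n (by omega)) (hintC.add hintD) measurableSet_Icc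
            (fun ω _ => hup_pt n hn ω)
      _ = (c * (p₁ * ((n-1:ℕ):ℝ)/2))^(-(1/α))
            + (1/2) * (2:ℝ)^(p₁ * ((n-1:ℕ):ℝ)/2) * (1 - p₁/2)^(n-1) := by
          rw [integral_add hintC hintD]
          congr 1
          · rw [setIntegral_const]; simp [Real.volume_Icc]
          · rw [integral_const_mul, F_eq hp₁ hp₂ hp (n-1)]
  -- geometric constant
  set q := (2:ℝ)^(p₁/2) * (1 - p₁/2) with hqdef
  have hq0 : 0 < q := mul_pos (Real.rpow_pos_of_pos (by norm_num) _) (by linarith)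
  have hq1 : q < 1 := by
    have h1 : (2:ℝ)^(p₁/2) = Real.exp (Real.log 2 * (p₁/2)) :=
      Real.rpow_def_of_pos (by norm_num) _
    have h2 : 1 - p₁/2 ≤ Real.exp (-(p₁/2)) := by
      have := Real.add_one_le_exp (-(p₁/2)); linarith
    have h3 : q ≤ Real.exp (Real.log 2 * (p₁/2)) * Real.exp (-(p₁/2)) := by
      rw [hqdef, h1]
      exact mul_le_mul_of_nonneg_left h2 (Real.exp_nonneg _)
    rw [← Real.exp_add] at h3
    have hlog : Real.log 2 < 1 := by
      have := Real.log_two_lt_d9; linarith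
    have hlogpos : 0 < Real.log 2 := Real.log_pos (by norm_num)
    have h4 : Real.log 2 * (p₁/2) + -(p₁/2) < 0 := by nlinarith
    calc q ≤ Real.exp (Real.log 2 * (p₁/2) + -(p₁/2)) := h3
      _ < 1 := Real.exp_lt_one_iff.mpr h4
  have hqm : ∀ m : ℕ, (2:ℝ)^(p₁ * (m:ℝ)/2) * (1 - p₁/2)^m = q^m := by
    intro m
    rw [hqdef, mul_pow, ← Real.rpow_mul_natCast (by norm_num : (0:ℝ) ≤ 2)]
    congr 2
    ring
  set k := ⌈1/α⌉₊ with hkdef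
  have hk : 1/α ≤ (k:ℝ) := Nat.le_ceil _
  have hsum : Summable (fun j : ℕ => (j:ℝ)^k * q^j) :=
    summable_pow_mul_geometric_of_norm_lt_one k
      (by rw [Real.norm_eq_abs, abs_of_pos hq0]; exact hq1)
  set S := ∑' j : ℕ, (j:ℝ)^k * q^j with hSdef
  have hSnn : 0 ≤ S := tsum_nonneg (fun j => by positivity)
  have hqbound : ∀ n : ℕ, 1 ≤ n → q^(n-1) ≤ (S/q) * (n:ℝ)^(-(1/α)) := by
    intro n hn
    have hnpos : (0:ℝ) < n := by exact_mod_cast hn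
    have h1 : (n:ℝ)^k * q^n ≤ S := hsum.le_tsum n (fun j _ => by positivity)
    have h2 : (n:ℝ)^((1:ℝ)/α) ≤ (n:ℝ)^k := by
      rw [← Real.rpow_natCast (n:ℝ) k]
      exact Real.rpow_le_rpow_of_exponent_le (by exact_mod_cast hn) hk
    have h3 : q^n = q^(n-1) * q := by
      rw [← pow_succ]
      congr 1
      omega
    have h4 : (n:ℝ)^(-(1/α)) = ((n:ℝ)^((1:ℝ)/α))⁻¹ := by
      rw [Real.rpow_neg hnpos.le]
    have hpow : (0:ℝ) < (n:ℝ)^((1:ℝ)/α) := Real.rpow_pos_of_pos hnpos _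
    have h5 : q^(n-1) * q * (n:ℝ)^((1:ℝ)/α) ≤ S := by
      calc q^(n-1) * q * (n:ℝ)^((1:ℝ)/α) = (n:ℝ)^((1:ℝ)/α) * q^n := by rw [h3]; ring
        _ ≤ (n:ℝ)^k * q^n := mul_le_mul_of_nonneg_right h2 (by positivity)
        _ ≤ S := h1
    rw [h4, show S/q * ((n:ℝ)^((1:ℝ)/α))⁻¹ = S / (q * (n:ℝ)^((1:ℝ)/α)) from by
      field_simp]
    rw [le_div_iff₀ (by positivity)]
    calc q^(n-1) * (q * (n:ℝ)^((1:ℝ)/α)) = q^(n-1) * q * (n:ℝ)^((1:ℝ)/α) := by ring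
      _ ≤ S := h5
  -- integral upper bound, clean form, n ≥ 2
  set Cup := (c*p₁/4)^(-(1/α)) + (1/2) * (S/q) with hCup
  have hIu : ∀ n : ℕ, 2 ≤ n → (∫ ω in Icc (0:ℝ) 1, X n ω) ≤ Cup * (n:ℝ)^(-(1/α)) := by
    intro n hn
    have hm1 : 1 ≤ n - 1 := by omega
    have hmcast : ((n-1:ℕ):ℝ) = (n:ℝ) - 1 := by
      push_cast [Nat.cast_sub (by omega : 1 ≤ n)]
      ring
    have hn2 : (2:ℝ) ≤ n := by exact_mod_cast hn
    have hnpos : (0:ℝ) < n := by linarith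
    have hmge : (n:ℝ)/2 ≤ ((n-1:ℕ):ℝ) := by rw [hmcast]; linarith
    have hA1 : (0:ℝ) < c*p₁/4*(n:ℝ) := by positivity
    have hA2 : c*p₁/4*(n:ℝ) ≤ c * (p₁ * ((n-1:ℕ):ℝ)/2) := by
      nlinarith [mul_le_mul_of_nonneg_left hmge (by positivity : (0:ℝ) ≤ c*p₁/2)]
    have ht1 : (c * (p₁ * ((n-1:ℕ):ℝ)/2))^(-(1/α)) ≤ (c*p₁/4)^(-(1/α)) * (n:ℝ)^(-(1/α)) := by
      rw [← Real.mul_rpow (by positivity) (Nat.cast_nonneg n)]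
      exact Real.rpow_le_rpow_of_nonpos hA1 hA2 (neg_nonpos.mpr (by positivity))
    have ht2 : (1/2) * (2:ℝ)^(p₁ * ((n-1:ℕ):ℝ)/2) * (1 - p₁/2)^(n-1)
        ≤ (1/2) * (S/q) * (n:ℝ)^(-(1/α)) := by
      rw [mul_assoc, hqm (n-1)]
      have h6 := hqbound n (by omega)
      calc (1/2) * q^(n-1) ≤ (1/2) * ((S/q) * (n:ℝ)^(-(1/α))) := by linarith
        _ = (1/2) * (S/q) * (n:ℝ)^(-(1/α)) := by ring
    calc (∫ ω in Icc (0:ℝ) 1, X n ω)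
        ≤ (c * (p₁ * ((n-1:ℕ):ℝ)/2))^(-(1/α))
            + (1/2) * (2:ℝ)^(p₁ * ((n-1:ℕ):ℝ)/2) * (1 - p₁/2)^(n-1) := hIu2 n hn
      _ ≤ (c*p₁/4)^(-(1/α)) * (n:ℝ)^(-(1/α)) + (1/2) * (S/q) * (n:ℝ)^(-(1/α)) :=
          add_le_add ht1 ht2
      _ = Cup * (n:ℝ)^(-(1/α)) := by rw [hCup]; ring
  -- final constant
  refine ⟨max cL⁻¹ (max Cup 1), le_trans (le_max_right _ _) (le_max_right _ _), ?_⟩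
  intro n hn
  have hC1 : (1:ℝ) ≤ max cL⁻¹ (max Cup 1) := le_trans (le_max_right _ _) (le_max_right _ _)
  have hCpos : (0:ℝ) < max cL⁻¹ (max Cup 1) := by linarith
  have hnn : (0:ℝ) ≤ (n:ℝ)^(-(1/α)) := Real.rpow_nonneg (Nat.cast_nonneg n) _
  constructor
  · have hinv : (max cL⁻¹ (max Cup 1))⁻¹ ≤ cL :=
      inv_le_of_inv_le₀ hcLpos (le_max_left _ _)
    calc (max cL⁻¹ (max Cup 1))⁻¹ * (n:ℝ)^(-(1/α)) ≤ cL * (n:ℝ)^(-(1/α)) :=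
        mul_le_mul_of_nonneg_right hinv hnn
      _ ≤ _ := hIl n hn
  · rcases eq_or_lt_of_le hn with h1 | h1
    · rw [← h1]
      have he : (∫ ω in Icc (0:ℝ) 1, X 1 ω) = ∫ _ω in Icc (0:ℝ) 1, (1/2:ℝ) :=
        setIntegral_congr_fun measurableSet_Icc (fun ω _ => hX1 ω)
      have he2 : (∫ _ω in Icc (0:ℝ) 1, (1/2:ℝ)) = 1/2 := by
        rw [setIntegral_const, Real.volume_real_Icc]
        norm_num
      rw [he, he2]
      have hone : ((1:ℕ):ℝ)^(-(1/α)) = 1 := by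
        rw [Nat.cast_one, Real.one_rpow]
      rw [hone, mul_one]
      linarith
    · have h2 : 2 ≤ n := h1
      calc (∫ ω in Icc (0:ℝ) 1, X n ω) ≤ Cup * (n:ℝ)^(-(1/α)) := hIu n h2
        _ ≤ max cL⁻¹ (max Cup 1) * (n:ℝ)^(-(1/α)) :=
          mul_le_mul_of_nonneg_right
            (le_trans (le_max_left _ _) (le_max_right _ _)) hnn
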